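/- Let n ≥ 4 and let K̃_n be the graph obtained from the complete bipartite graph K_{n,n} with parts {1,...,n} and {1',...,n'} by deleting all edges jj' for j in {1,...,n}. Then every 1-cycle in K̃_n is a symmetric-difference sum of finitely many edge sets of simple cycles of length 4. -/

import Mathlib

/-- A 1-cycle in a simple graph `G` is a set `C` of edges of `G` such that every
vertex is incident to an even number of edges of `C`. -/
def IsOneCycle {V : Type*} [DecidableEq V] (G : SimpleGraph V) (C : Finset (Sym2 V)) : Prop :=
  (∀ e ∈ C, e ∈ G.edgeSet) ∧ ∀ v : V, Even (C.filter (fun e => v ∈ e)).card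

/-- `s` is the edge set of a simple cycle of length 4 in `G`. -/
def IsQuadCycle {V : Type*} [DecidableEq V] (G : SimpleGraph V) (s : Finset (Sym2 V)) : Prop :=
  ∃ a b c d : V, a ≠ b ∧ a ≠ c ∧ a ≠ d ∧ b ≠ c ∧ b ≠ d ∧ c ≠ d ∧
    G.Adj a b ∧ G.Adj b c ∧ G.Adj c d ∧ G.Adj d a ∧
    s = {s(a, b), s(b, c), s(c, d), s(d, a)}

/-- `K̃_n`: the complete bipartite graph `K_{n,n}` with the perfect matching of
edges `j j'` removed; vertex `Sum.inl i` is adjacent to `Sum.inr j` iff `i ≠ j`. -/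
def tildeK (n : ℕ) : SimpleGraph (Fin n ⊕ Fin n) :=
  SimpleGraph.fromRel (fun a b => ∃ i j : Fin n, i ≠ j ∧ a = Sum.inl i ∧ b = Sum.inr j)

open Finset
open scoped symmDiff

namespace TKaux

/- ## Generic finset helpers -/

theorem filt_symmDiff {α} [DecidableEq α] (s t : Finset α) (p : α → Prop) [DecidablePred p] :
    (s ∆ t).filter p = (s.filter p) ∆ (t.filter p) := by
  ext a; simp [Finset.mem_symmDiff]; tauto

theorem even_card_symmDiff {α} [DecidableEq α] {s t : Finset α} (hs : Even s.card)
    (ht : Even t.card) : Even ((s ∆ t).card) := by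
  have h1 : (s ∆ t).card = (s \ t).card + (t \ s).card := by
    rw [symmDiff_def]
    exact Finset.card_union_of_disjoint (disjoint_sdiff_sdiff)
  have h2 := Finset.card_sdiff_add_card_inter s t
  have h3 := Finset.card_sdiff_add_card_inter t s
  rw [Finset.inter_comm] at h3
  rcases hs with ⟨m, hm⟩; rcases ht with ⟨k, hk⟩
  refine ⟨((s ∆ t).card) / 2, by omega⟩

theorem even_subset_pair {α} [DecidableEq α] {s : Finset α} {x y : α} (hxy : x ≠ y)
    (hs : s ⊆ {x, y}) (he : Even s.card) : (x ∈ s ↔ y ∈ s) := by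
  have key : ∀ u v : α, u ≠ v → s ⊆ {u, v} → u ∈ s → v ∉ s → False := by
    intro u v huv hsub hu hv
    have h1 : s ⊆ {u} := by
      intro a ha
      have := hsub ha
      simp at this ⊢
      rcases this with rfl | rfl
      · rfl
      · exact absurd ha hv
    have h2 : s = {u} := by
      rw [Finset.subset_singleton_iff] at h1
      rcases h1 with rfl | rfl
      · simp at hu
      · rfl
    rw [h2] at he; simp at he
  constructor
  · intro hx; by_contra hy; exact key x y hxy hs hx hy
  · intro hy; by_contra hx; exact key y x hxy.symm (by rwa [Finset.pair_comm]) hy hx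

theorem even_subset_single {α} [DecidableEq α] {s : Finset α} {x : α}
    (hs : s ⊆ {x}) (he : Even s.card) : s = ∅ := by
  rw [Finset.subset_singleton_iff] at hs
  rcases hs with rfl | rfl
  · rfl
  · simp at he

theorem exists_ne_of_even_mem {α} [DecidableEq α] {s : Finset α} {x : α}
    (he : Even s.card) (hx : x ∈ s) : ∃ y ∈ s, y ≠ x := by
  by_contra h
  push_neg at h
  have : s = {x} := Finset.eq_singleton_iff_unique_mem.2 ⟨hx, h⟩
  rw [this] at he; simp at he

theorem symmDiff_subset_union {α} [DecidableEq α] (s t : Finset α) : s ∆ t ⊆ s ∪ t := by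
  intro a ha
  rw [Finset.mem_symmDiff] at ha
  simp only [Finset.mem_union]
  tauto

theorem foldr_symmDiff_append {α} [DecidableEq α] (l₁ l₂ : List (Finset α)) :
    (l₁ ++ l₂).foldr symmDiff ∅ = (l₁.foldr symmDiff ∅) ∆ (l₂.foldr symmDiff ∅) := by
  induction l₁ with
  | nil => rw [List.nil_append]; exact (bot_symmDiff _).symm
  | cons a l ih => simp [List.foldr_cons, ih, symmDiff_assoc]

variable {n : ℕ}

/- ## The `K̃_n`-specific layer -/

def edg (i j : Fin n) : Sym2 (Fin n ⊕ Fin n) := s(Sum.inl i, Sum.inr j)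

theorem adj_iff (i j : Fin n) : (tildeK n).Adj (Sum.inl i) (Sum.inr j) ↔ i ≠ j := by
  simp [tildeK, SimpleGraph.fromRel_adj]

theorem adj_iff' (i j : Fin n) : (tildeK n).Adj (Sum.inr j) (Sum.inl i) ↔ i ≠ j := by
  rw [SimpleGraph.adj_comm]; exact adj_iff i j

theorem edg_eq_iff {i j i' j' : Fin n} : edg i j = edg i' j' ↔ i = i' ∧ j = j' := by
  simp [edg, Sym2.eq_iff]

theorem edg_injective : Function.Injective (fun p : Fin n × Fin n => edg p.1 p.2) := by
  intro p q h
  simp only [edg_eq_iff] at h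
  exact Prod.ext h.1 h.2

def emb (D : Finset (Fin n × Fin n)) : Finset (Sym2 (Fin n ⊕ Fin n)) :=
  D.image (fun p => edg p.1 p.2)

theorem emb_symmDiff (D E : Finset (Fin n × Fin n)) : emb (D ∆ E) = emb D ∆ emb E :=
  Finset.image_symmDiff D E edg_injective

def quadP (a a' b b' : Fin n) : Finset (Fin n × Fin n) :=
  {(a, b), (a, b'), (a', b), (a', b')}

theorem quadP_isQuad {a a' b b' : Fin n} (haa : a ≠ a') (hbb : b ≠ b')
    (h1 : a ≠ b) (h2 : a ≠ b') (h3 : a' ≠ b) (h4 : a' ≠ b') :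
    IsQuadCycle (tildeK n) (emb (quadP a a' b b')) := by
  refine ⟨Sum.inl a, Sum.inr b, Sum.inl a', Sum.inr b',
    by simp, by simp [haa], by simp, by simp, by simp [hbb], by simp,
    (adj_iff a b).2 h1, (adj_iff' a' b).2 h3, (adj_iff a' b').2 h4, (adj_iff' a b').2 h2, ?_⟩
  have e1 : s(Sum.inr b, Sum.inl a') = edg a' b := Sym2.eq_swap
  have e2 : s(Sum.inr b', Sum.inl a) = edg a b' := Sym2.eq_swap
  show emb (quadP a a' b b') = {edg a b, s(Sum.inr b, Sum.inl a'), edg a' b', s(Sum.inr b', Sum.inl a)}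
  rw [e1, e2]
  ext e
  simp [emb, quadP]
  tauto

theorem quadP_ne {a a' b b' : Fin n}
    (h1 : a ≠ b) (h2 : a ≠ b') (h3 : a' ≠ b) (h4 : a' ≠ b') :
    ∀ p ∈ quadP a a' b b', p.1 ≠ p.2 := by
  intro p hp
  simp [quadP] at hp
  rcases hp with rfl | rfl | rfl | rfl <;> simpa

theorem quadP_card_le (a a' b b' : Fin n) : (quadP a a' b b').card ≤ 4 := by
  unfold quadP
  apply le_trans (Finset.card_insert_le _ _)
  simp
  apply Nat.lt_succ_of_le; apply le_trans (Finset.card_insert_le _ _)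
  simp
  apply Nat.lt_succ_of_le; apply le_trans (Finset.card_insert_le _ _)
  simp

theorem quadP_filter_row_eq {a a' b b' : Fin n} (hbb : b ≠ b') {i : Fin n} (hi : a = i)
    (hi' : a' ≠ i) :
    (quadP a a' b b').filter (fun p => p.1 = i) = {(a, b), (a, b')} := by
  subst hi
  ext p; simp [quadP, Finset.mem_filter]
  constructor
  · rintro ⟨(rfl|rfl|rfl|rfl), h⟩ <;> simp_all
  · rintro (rfl|rfl) <;> simp

theorem quadP_rows {a a' b b' : Fin n} (haa : a ≠ a') (hbb : b ≠ b') (i : Fin n) :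
    Even (((quadP a a' b b').filter (fun p => p.1 = i)).card) := by
  by_cases ha : a = i
  · rw [quadP_filter_row_eq hbb ha (fun h => haa (ha ▸ h ▸ rfl))]
    rw [Finset.card_insert_of_notMem (by simp [hbb]), Finset.card_singleton]
    exact ⟨1, rfl⟩
  · by_cases ha' : a' = i
    · have hsw : quadP a a' b b' = quadP a' a b b' := by
        ext p; simp [quadP]; tauto
      rw [hsw, quadP_filter_row_eq hbb ha' ha]
      rw [Finset.card_insert_of_notMem (by simp [hbb]), Finset.card_singleton]
      exact ⟨1, rfl⟩
    · have hz : (quadP a a' b b').filter (fun p => p.1 = i) = ∅ := by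
        ext p; simp [quadP, Finset.mem_filter]
        rintro (rfl|rfl|rfl|rfl) <;> simp_all
      rw [hz]; simp

theorem quadP_swap_cols (a a' b b' : Fin n) : quadP a a' b b' = quadP a a' b' b := by
  ext p; simp [quadP]; tauto

theorem quadP_filter_col_eq {a a' b b' : Fin n} (haa : a ≠ a') {j : Fin n} (hj : b = j)
    (hj' : b' ≠ j) :
    (quadP a a' b b').filter (fun p => p.2 = j) = {(a, b), (a', b)} := by
  subst hj
  ext p; simp [quadP, Finset.mem_filter]
  constructor
  · rintro ⟨(rfl|rfl|rfl|rfl), h⟩ <;> simp_all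
  · rintro (rfl|rfl) <;> simp

theorem quadP_cols {a a' b b' : Fin n} (haa : a ≠ a') (hbb : b ≠ b') (j : Fin n) :
    Even (((quadP a a' b b').filter (fun p => p.2 = j)).card) := by
  by_cases hb : b = j
  · rw [quadP_filter_col_eq haa hb (fun h => hbb (hb ▸ h ▸ rfl))]
    rw [Finset.card_insert_of_notMem (by simp [haa]), Finset.card_singleton]
    exact ⟨1, rfl⟩
  · by_cases hb' : b' = j
    · rw [quadP_swap_cols, quadP_filter_col_eq haa hb' hb]
      rw [Finset.card_insert_of_notMem (by simp [haa]), Finset.card_singleton]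
      exact ⟨1, rfl⟩
    · have hz : (quadP a a' b b').filter (fun p => p.2 = j) = ∅ := by
        ext p; simp [quadP, Finset.mem_filter]
        rintro (rfl|rfl|rfl|rfl) <;> simp_all
      rw [hz]; simp

theorem quadP_card {a a' b b' : Fin n} (haa : a ≠ a') (hbb : b ≠ b') :
    (quadP a a' b b').card = 4 := by
  unfold quadP
  rw [Finset.card_insert_of_notMem (by simp [haa, hbb]),
    Finset.card_insert_of_notMem (by simp [haa, hbb]),
    Finset.card_insert_of_notMem (by simp [haa, hbb]), Finset.card_singleton]

/- ## The span predicate -/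

def Span (n : ℕ) (C : Finset (Sym2 (Fin n ⊕ Fin n))) : Prop :=
  ∃ l : List (Finset (Sym2 (Fin n ⊕ Fin n))),
    (∀ s ∈ l, IsQuadCycle (tildeK n) s) ∧ C = l.foldr symmDiff ∅

theorem span_empty : Span n ∅ := ⟨[], by simp, rfl⟩

theorem span_quad {Q : Finset (Sym2 (Fin n ⊕ Fin n))} (h : IsQuadCycle (tildeK n) Q) :
    Span n Q := ⟨[Q], by simpa, (symmDiff_bot Q).symm⟩

theorem span_symmDiff {C D : Finset (Sym2 (Fin n ⊕ Fin n))} (hc : Span n C) (hd : Span n D) :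
    Span n (C ∆ D) := by
  obtain ⟨l₁, hl₁, rfl⟩ := hc
  obtain ⟨l₂, hl₂, rfl⟩ := hd
  exact ⟨l₁ ++ l₂, by
    intro s hs
    rcases List.mem_append.1 hs with h | h
    · exact hl₁ s h
    · exact hl₂ s h, (foldr_symmDiff_append l₁ l₂).symm⟩

/- ## Good condition and its preservation -/

def Good (D : Finset (Fin n × Fin n)) : Prop :=
  (∀ p ∈ D, p.1 ≠ p.2) ∧ (∀ i : Fin n, Even ((D.filter (fun p => p.1 = i)).card)) ∧
    (∀ j : Fin n, Even ((D.filter (fun p => p.2 = j)).card))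

theorem good_symmDiff_quadP {D : Finset (Fin n × Fin n)} (hD : Good D)
    {a a' b b' : Fin n} (haa : a ≠ a') (hbb : b ≠ b')
    (h1 : a ≠ b) (h2 : a ≠ b') (h3 : a' ≠ b) (h4 : a' ≠ b') :
    Good (D ∆ quadP a a' b b') := by
  obtain ⟨hne, hr, hc⟩ := hD
  refine ⟨?_, ?_, ?_⟩
  · intro p hp
    rw [Finset.mem_symmDiff] at hp
    rcases hp with ⟨hp, -⟩ | ⟨hp, -⟩
    · exact hne p hp
    · exact quadP_ne h1 h2 h3 h4 p hp
  · intro i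
    rw [filt_symmDiff]
    exact even_card_symmDiff (hr i) (quadP_rows haa hbb i)
  · intro j
    rw [filt_symmDiff]
    exact even_card_symmDiff (hc j) (quadP_cols haa hbb j)

theorem span_step {D : Finset (Fin n × Fin n)}
    {a a' b b' : Fin n} (haa : a ≠ a') (hbb : b ≠ b')
    (h1 : a ≠ b) (h2 : a ≠ b') (h3 : a' ≠ b) (h4 : a' ≠ b')
    (h : Span n (emb (D ∆ quadP a a' b b'))) : Span n (emb D) := by
  have hD : D = (D ∆ quadP a a' b b') ∆ quadP a a' b b' := by
    rw [symmDiff_assoc, symmDiff_self, symmDiff_bot]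
  rw [hD, emb_symmDiff]
  exact span_symmDiff h (span_quad (quadP_isQuad haa hbb h1 h2 h3 h4))


/- ## Basics for small indices -/

def Out : Fin n × Fin n → Prop := fun p => 2 ≤ p.1.val ∧ 2 ≤ p.2.val

instance : DecidablePred (Out (n := n)) := fun _ => instDecidableAnd

theorem mini {y z o : Fin n} (hz : z.val = 0) (ho : o.val = 1) (h : y.val < 2) :
    y = z ∨ y = o := by
  have : y.val = 0 ∨ y.val = 1 := by omega
  rcases this with h0 | h1
  · exact Or.inl (Fin.ext (by omega))
  · exact Or.inr (Fin.ext (by omega))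

theorem symmDiff_singleton_mem {α} [DecidableEq α] {s : Finset α} {x : α} (h : x ∈ s) :
    s ∆ {x} = s.erase x := by
  ext a
  rw [Finset.mem_symmDiff]
  simp only [Finset.mem_singleton, Finset.mem_erase]
  constructor
  · rintro (⟨h1, h2⟩ | ⟨rfl, h2⟩)
    · exact ⟨h2, h1⟩
    · exact absurd h h2
  · rintro ⟨hne, hmem⟩
    exact Or.inl ⟨hmem, hne⟩

/- ## The key induction -/

theorem key (hn : 4 ≤ n) (N : ℕ) :
    ∀ D : Finset (Fin n × Fin n), D.card + 4 * (D.filter Out).card ≤ N →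
      Good D → Span n (emb D) := by
  induction N with
  | zero =>
    intro D hle _
    have : D = ∅ := Finset.card_eq_zero.mp (by omega)
    subst this
    have : emb (∅ : Finset (Fin n × Fin n)) = ∅ := rfl
    rw [this]
    exact span_empty
  | succ N ih =>
    intro D hle hGood
    obtain ⟨hne, hr, hc⟩ := hGood
    rcases eq_or_ne D ∅ with rfl | hD
    · have : emb (∅ : Finset (Fin n × Fin n)) = ∅ := rfl
      rw [this]; exact span_empty
    obtain ⟨z, o, hzv, hov⟩ : ∃ z o : Fin n, z.val = 0 ∧ o.val = 1 :=
      ⟨⟨0, by omega⟩, ⟨1, by omega⟩, rfl, rfl⟩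
    have hzo : z ≠ o := Fin.ne_of_val_ne (by omega)
    by_cases hOut : ∃ p ∈ D, Out p
    · -- reduction of an entry away from rows/cols 0,1
      obtain ⟨⟨a, b⟩, hpD, hout⟩ := hOut
      have ha2 : 2 ≤ a.val := hout.1
      have hb2 : 2 ≤ b.val := hout.2
      have hab : a ≠ b := hne ⟨a, b⟩ hpD
      have haz : a ≠ z := Fin.ne_of_val_ne (by omega)
      have hao : a ≠ o := Fin.ne_of_val_ne (by omega)
      have hbz : z ≠ b := Fin.ne_of_val_ne (by omega)
      have hbo : b ≠ o := Fin.ne_of_val_ne (by omega)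
      apply span_step haz hbo hab hao hbz hzo
      have habQ : (a, b) ∈ quadP a z b o := by simp [quadP]
      have hQf : (quadP a z b o).filter Out = {(a, b)} := by
        ext p
        simp only [quadP, Finset.mem_filter, Finset.mem_insert, Finset.mem_singleton]
        constructor
        · rintro ⟨rfl | rfl | rfl | rfl, hop⟩
          · rfl
          · exact absurd hop (by simp only [Out, not_and, not_le]; omega)
          · exact absurd hop (by simp only [Out, not_and, not_le]; omega)
          · exact absurd hop (by simp only [Out, not_and, not_le]; omega)
        · rintro rfl
          exact ⟨Or.inl rfl, hout⟩
      have hfil : (D ∆ quadP a z b o).filter Out = (D.filter Out).erase (a, b) := by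
        rw [filt_symmDiff, hQf]
        exact symmDiff_singleton_mem (Finset.mem_filter.2 ⟨hpD, hout⟩)
      have hmemf : (a, b) ∈ D.filter Out := Finset.mem_filter.2 ⟨hpD, hout⟩
      have hcard1 : ((D ∆ quadP a z b o).filter Out).card = (D.filter Out).card - 1 := by
        rw [hfil, Finset.card_erase_of_mem hmemf]
      have hpos : 1 ≤ (D.filter Out).card := Finset.card_pos.2 ⟨(a, b), hmemf⟩
      have hsub : D ∆ quadP a z b o ⊆ (D ∪ quadP a z b o).erase (a, b) := by
        intro p hp
        rw [Finset.mem_symmDiff] at hp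
        rw [Finset.mem_erase, Finset.mem_union]
        rcases hp with ⟨h1, h2⟩ | ⟨h1, h2⟩
        · exact ⟨fun h => h2 (h ▸ habQ), Or.inl h1⟩
        · exact ⟨fun h => h2 (h ▸ hpD), Or.inr h1⟩
      have hcard2 : (D ∆ quadP a z b o).card ≤ D.card + 3 := by
        have h1 := Finset.card_le_card hsub
        have h2 : ((D ∪ quadP a z b o).erase (a, b)).card = (D ∪ quadP a z b o).card - 1 :=
          Finset.card_erase_of_mem (Finset.mem_union.2 (Or.inl hpD))
        have h3 := Finset.card_union_le D (quadP a z b o)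
        have h4 := quadP_card_le a z b o
        omega
      apply ih
      · omega
      · exact good_symmDiff_quadP ⟨hne, hr, hc⟩ haz hbo hab hao hbz hzo
    · push_neg at hOut
      have hsmall : ∀ p ∈ D, p.1.val < 2 ∨ p.2.val < 2 := by
        intro p hp
        have := hOut p hp
        simp only [Out, not_and, not_le] at this
        omega
      have row_pair : ∀ i : Fin n, 2 ≤ i.val → ((i, z) ∈ D ↔ (i, o) ∈ D) := by
        intro i hi
        have hsb : D.filter (fun p => p.1 = i) ⊆ {(i, z), (i, o)} := by
          rintro ⟨x, y⟩ hp
          rw [Finset.mem_filter] at hp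
          obtain ⟨hmem, hx⟩ := hp
          cases hx
          have hy : y.val < 2 := by
            rcases hsmall _ hmem with h | h
            · omega
            · exact h
          rcases mini hzv hov hy with rfl | rfl
          · simp
          · simp
        have := even_subset_pair (x := (i, z)) (y := (i, o))
          (by simp [hzo]) hsb (hr i)
        simpa using this
      have col_pair : ∀ j : Fin n, 2 ≤ j.val → ((z, j) ∈ D ↔ (o, j) ∈ D) := by
        intro j hj
        have hsb : D.filter (fun p => p.2 = j) ⊆ {(z, j), (o, j)} := by
          rintro ⟨x, y⟩ hp
          rw [Finset.mem_filter] at hp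
          obtain ⟨hmem, hy⟩ := hp
          cases hy
          have hx : x.val < 2 := by
            rcases hsmall _ hmem with h | h
            · exact h
            · omega
          rcases mini hzv hov hx with rfl | rfl
          · simp
          · simp
        have := even_subset_pair (x := (z, j)) (y := (o, j))
          (by simp [hzo]) hsb (hc j)
        simpa using this
      by_cases hB : ∃ i i' : Fin n, 2 ≤ i.val ∧ 2 ≤ i'.val ∧ i ≠ i' ∧ (i, z) ∈ D ∧ (i', z) ∈ D
      · obtain ⟨i, i', hi2, hi'2, hii, hiz, hi'z⟩ := hB
        have hio : (i, o) ∈ D := (row_pair i hi2).1 hiz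
        have hi'o : (i', o) ∈ D := (row_pair i' hi'2).1 hi'z
        have hiz' : i ≠ z := Fin.ne_of_val_ne (by omega)
        have hio' : i ≠ o := Fin.ne_of_val_ne (by omega)
        have hi'z' : i' ≠ z := Fin.ne_of_val_ne (by omega)
        have hi'o' : i' ≠ o := Fin.ne_of_val_ne (by omega)
        apply span_step hii hzo hiz' hio' hi'z' hi'o'
        have hsub : quadP i i' z o ⊆ D := by
          intro p hp
          simp only [quadP, Finset.mem_insert, Finset.mem_singleton] at hp
          rcases hp with rfl | rfl | rfl | rfl <;> assumption
        have hsd : D ∆ quadP i i' z o = D \ quadP i i' z o := by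
          rw [symmDiff_def]
          rw [Finset.sdiff_eq_empty_iff_subset.2 hsub]
          simp
        have hq4 : (quadP i i' z o).card = 4 := quadP_card hii hzo
        have hcard : (D ∆ quadP i i' z o).card = D.card - 4 := by
          rw [hsd, Finset.card_sdiff_of_subset hsub, hq4]
        have hD4 : 4 ≤ D.card := hq4 ▸ Finset.card_le_card hsub
        have hfil : ((D ∆ quadP i i' z o).filter Out).card ≤ (D.filter Out).card := by
          apply Finset.card_le_card
          apply Finset.filter_subset_filter
          rw [hsd]
          exact Finset.sdiff_subset
        apply ih
        · omega
        · exact good_symmDiff_quadP ⟨hne, hr, hc⟩ hii hzo hiz' hio' hi'z' hi'o'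
      · by_cases hB' : ∃ j j' : Fin n,
            2 ≤ j.val ∧ 2 ≤ j'.val ∧ j ≠ j' ∧ (z, j) ∈ D ∧ (z, j') ∈ D
        · obtain ⟨j, j', hj2, hj'2, hjj, hzj, hzj'⟩ := hB'
          have hoj : (o, j) ∈ D := (col_pair j hj2).1 hzj
          have hoj' : (o, j') ∈ D := (col_pair j' hj'2).1 hzj'
          have hjz' : z ≠ j := Fin.ne_of_val_ne (by omega)
          have hjo' : o ≠ j := Fin.ne_of_val_ne (by omega)
          have hj'z' : z ≠ j' := Fin.ne_of_val_ne (by omega)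
          have hj'o' : o ≠ j' := Fin.ne_of_val_ne (by omega)
          apply span_step hzo hjj hjz' hj'z' hjo' hj'o'
          have hsub : quadP z o j j' ⊆ D := by
            intro p hp
            simp only [quadP, Finset.mem_insert, Finset.mem_singleton] at hp
            rcases hp with rfl | rfl | rfl | rfl <;> assumption
          have hsd : D ∆ quadP z o j j' = D \ quadP z o j j' := by
            rw [symmDiff_def]
            rw [Finset.sdiff_eq_empty_iff_subset.2 hsub]
            simp
          have hq4 : (quadP z o j j').card = 4 := quadP_card hzo hjj
          have hcard : (D ∆ quadP z o j j').card = D.card - 4 := by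
            rw [hsd, Finset.card_sdiff_of_subset hsub, hq4]
          have hD4 : 4 ≤ D.card := hq4 ▸ Finset.card_le_card hsub
          have hfil : ((D ∆ quadP z o j j').filter Out).card ≤ (D.filter Out).card := by
            apply Finset.card_le_card
            apply Finset.filter_subset_filter
            rw [hsd]
            exact Finset.sdiff_subset
          apply ih
          · omega
          · exact good_symmDiff_quadP ⟨hne, hr, hc⟩ hzo hjj hjz' hj'z' hjo' hj'o'
        · -- terminal case: D is forced to be a specific 6-cycle
          -- Step 1: there is a "big" row meeting column z
          have hA : ∃ i₀ : Fin n, 2 ≤ i₀.val ∧ (i₀, z) ∈ D := by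
            by_contra hA
            push_neg at hA
            have hbigrow : ∀ i : Fin n, 2 ≤ i.val → ∀ b, (i, b) ∉ D := by
              intro i hi b hmem
              have hbv : b.val < 2 := by
                rcases hsmall _ hmem with h | h
                · have h' : i.val < 2 := h
                  omega
                · exact h
              rcases mini hzv hov hbv with rfl | rfl
              · exact hA i hi hmem
              · exact hA i hi ((row_pair i hi).2 hmem)
            have hzonotmem : (z, o) ∉ D := by
              have hco : D.filter (fun p => p.2 = o) ⊆ {(z, o)} := by
                rintro ⟨x, y⟩ hp
                rw [Finset.mem_filter] at hp
                obtain ⟨hmem, hy⟩ := hp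
                have hy' : y = o := hy
                subst hy'
                have hxv : x.val < 2 := by
                  by_contra h
                  push_neg at h
                  exact hbigrow x h _ hmem
                rcases mini hzv hov hxv with rfl | rfl
                · simp
                · exact absurd rfl (hne _ hmem)
              have hempty := even_subset_single hco (hc o)
              intro hmem
              have : ((z, o) : Fin n × Fin n) ∈ D.filter (fun p => p.2 = o) :=
                Finset.mem_filter.2 ⟨hmem, rfl⟩
              rw [hempty] at this
              simp at this
            have hoznotmem : (o, z) ∉ D := by
              have hcz : D.filter (fun p => p.2 = z) ⊆ {(o, z)} := by
                rintro ⟨x, y⟩ hp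
                rw [Finset.mem_filter] at hp
                obtain ⟨hmem, hy⟩ := hp
                have hy' : y = z := hy
                subst hy'
                have hxv : x.val < 2 := by
                  by_contra h
                  push_neg at h
                  exact hbigrow x h _ hmem
                rcases mini hzv hov hxv with rfl | rfl
                · exact absurd rfl (hne _ hmem)
                · simp
              have hempty := even_subset_single hcz (hc z)
              intro hmem
              have : ((o, z) : Fin n × Fin n) ∈ D.filter (fun p => p.2 = z) :=
                Finset.mem_filter.2 ⟨hmem, rfl⟩
              rw [hempty] at this
              simp at this
            obtain ⟨⟨x, y⟩, hmem⟩ := Finset.nonempty_iff_ne_empty.2 hD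
            have hxv : x.val < 2 := by
              by_contra h
              push_neg at h
              exact hbigrow x h _ hmem
            have hyb : 2 ≤ y.val := by
              by_contra h
              push_neg at h
              rcases mini hzv hov h with rfl | rfl <;> rcases mini hzv hov hxv with rfl | rfl
              · exact absurd rfl (hne _ hmem)
              · exact hoznotmem hmem
              · exact hzonotmem hmem
              · exact absurd rfl (hne _ hmem)
            have hzy : (z, y) ∈ D := by
              rcases mini hzv hov hxv with rfl | rfl
              · exact hmem
              · exact (col_pair y hyb).2 hmem
            have hrowz : D.filter (fun p => p.1 = z) ⊆ {(z, y)} := by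
              rintro ⟨u, c⟩ hp
              rw [Finset.mem_filter] at hp
              obtain ⟨hmem', hu⟩ := hp
              have hu' : u = z := hu
              subst hu'
              have hcb : 2 ≤ c.val := by
                by_contra h
                push_neg at h
                rcases mini hzv hov h with rfl | rfl
                · exact absurd rfl (hne _ hmem')
                · exact hzonotmem hmem'
              have : c = y := by
                by_contra hcy
                exact hB' ⟨c, y, hcb, hyb, hcy, hmem', hzy⟩
              subst this
              simp
            have hempty := even_subset_single hrowz (hr z)
            have : ((z, y) : Fin n × Fin n) ∈ D.filter (fun p => p.1 = z) :=
              Finset.mem_filter.2 ⟨hzy, rfl⟩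
            rw [hempty] at this
            simp at this
          obtain ⟨i₀, hi02, hi0z⟩ := hA
          have hi0o : (i₀, o) ∈ D := (row_pair i₀ hi02).1 hi0z
          have hi0nz : i₀ ≠ z := Fin.ne_of_val_ne (by omega)
          have hi0no : i₀ ≠ o := Fin.ne_of_val_ne (by omega)
          -- Step 2: (o, z) ∈ D and (z, o) ∈ D
          have hoz : (o, z) ∈ D := by
            have hcz : D.filter (fun p => p.2 = z) ⊆ {(i₀, z), (o, z)} := by
              rintro ⟨x, y⟩ hp
              rw [Finset.mem_filter] at hp
              obtain ⟨hmem, hy⟩ := hp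
              have hy' : y = z := hy
              subst hy'
              by_cases hx : 2 ≤ x.val
              · have : x = i₀ := by
                  by_contra hxi
                  exact hB ⟨x, i₀, hx, hi02, hxi, hmem, hi0z⟩
                subst this
                simp
              · push_neg at hx
                rcases mini hzv hov hx with rfl | rfl
                · exact absurd rfl (hne _ hmem)
                · simp
            have hiff := even_subset_pair (x := ((i₀, z) : Fin n × Fin n)) (y := (o, z))
              (by simp [hi0no]) hcz (hc z)
            have h1 : ((i₀, z) : Fin n × Fin n) ∈ D.filter (fun p => p.2 = z) :=
              Finset.mem_filter.2 ⟨hi0z, rfl⟩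
            exact (Finset.mem_filter.1 (hiff.1 h1)).1
          have hzo' : (z, o) ∈ D := by
            have hco : D.filter (fun p => p.2 = o) ⊆ {(i₀, o), (z, o)} := by
              rintro ⟨x, y⟩ hp
              rw [Finset.mem_filter] at hp
              obtain ⟨hmem, hy⟩ := hp
              have hy' : y = o := hy
              subst hy'
              by_cases hx : 2 ≤ x.val
              · have hxz : (x, z) ∈ D := (row_pair x hx).2 hmem
                have : x = i₀ := by
                  by_contra hxi
                  exact hB ⟨x, i₀, hx, hi02, hxi, hxz, hi0z⟩
                subst this
                simp
              · push_neg at hx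
                rcases mini hzv hov hx with rfl | rfl
                · simp
                · exact absurd rfl (hne _ hmem)
            have hiff := even_subset_pair (x := ((i₀, o) : Fin n × Fin n)) (y := (z, o))
              (by simp [hi0nz]) hco (hc o)
            have h1 : ((i₀, o) : Fin n × Fin n) ∈ D.filter (fun p => p.2 = o) :=
              Finset.mem_filter.2 ⟨hi0o, rfl⟩
            exact (Finset.mem_filter.1 (hiff.1 h1)).1
          -- Step 3: a big column j₀
          have hDj : ∃ j₀ : Fin n, 2 ≤ j₀.val ∧ (o, j₀) ∈ D := by
            have hozf : ((o, z) : Fin n × Fin n) ∈ D.filter (fun p => p.1 = o) :=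
              Finset.mem_filter.2 ⟨hoz, rfl⟩
            obtain ⟨⟨u, c⟩, hu, hune⟩ := exists_ne_of_even_mem (hr o) hozf
            rw [Finset.mem_filter] at hu
            obtain ⟨humem, hu1⟩ := hu
            have hu1' : u = o := hu1
            subst hu1'
            have hcz : c ≠ z := fun h => hune (by rw [h])
            have hcb : 2 ≤ c.val := by
              by_contra h
              push_neg at h
              rcases mini hzv hov h with rfl | rfl
              · exact absurd rfl hcz
              · exact absurd rfl (hne _ humem).symm
            exact ⟨c, hcb, humem⟩
          obtain ⟨j₀, hj02, hoj0⟩ := hDj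
          have hzj0 : (z, j₀) ∈ D := (col_pair j₀ hj02).2 hoj0
          have hj0nz : j₀ ≠ z := Fin.ne_of_val_ne (by omega)
          have hj0no : j₀ ≠ o := Fin.ne_of_val_ne (by omega)
          -- Step 4: D is exactly the 6-cycle
          have hDS : D = {(i₀, z), (i₀, o), (z, j₀), (o, j₀), (z, o), (o, z)} := by
            apply Finset.Subset.antisymm
            · rintro ⟨x, y⟩ hmem
              simp only [Finset.mem_insert, Finset.mem_singleton, Prod.mk.injEq]
              by_cases hx : 2 ≤ x.val
              · have hyv : y.val < 2 := by
                  rcases hsmall _ hmem with h | h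
                  · have h' : x.val < 2 := h
                    omega
                  · exact h
                have hxz2 : (x, z) ∈ D := by
                  rcases mini hzv hov hyv with rfl | rfl
                  · exact hmem
                  · exact (row_pair x hx).2 hmem
                have hxi : x = i₀ := by
                  by_contra hxi
                  exact hB ⟨x, i₀, hx, hi02, hxi, hxz2, hi0z⟩
                subst hxi
                rcases mini hzv hov hyv with rfl | rfl
                · simp
                · simp
              · push_neg at hx
                rcases mini hzv hov hx with rfl | rfl
                · by_cases hyb : 2 ≤ y.val
                  · have : y = j₀ := by
                      by_contra hyj
                      exact hB' ⟨y, j₀, hyb, hj02, hyj, hmem, hzj0⟩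
                    subst this
                    simp
                  · push_neg at hyb
                    rcases mini hzv hov hyb with rfl | rfl
                    · exact absurd rfl (hne _ hmem)
                    · simp
                · by_cases hyb : 2 ≤ y.val
                  · have hzy : (z, y) ∈ D := (col_pair y hyb).2 hmem
                    have : y = j₀ := by
                      by_contra hyj
                      exact hB' ⟨y, j₀, hyb, hj02, hyj, hzy, hzj0⟩
                    subst this
                    simp
                  · push_neg at hyb
                    rcases mini hzv hov hyb with rfl | rfl
                    · simp
                    · exact absurd rfl (hne _ hmem)
            · intro p hp
              simp only [Finset.mem_insert, Finset.mem_singleton] at hp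
              rcases hp with rfl | rfl | rfl | rfl | rfl | rfl <;> assumption
          -- Step 5: decompose the 6-cycle into quads
          by_cases hij : i₀ = j₀
          · subst hij
            obtain ⟨k, hk2, hki⟩ : ∃ k : Fin n, 2 ≤ k.val ∧ k ≠ i₀ := by
              by_cases h : i₀.val = 2
              · exact ⟨⟨3, by omega⟩, by simp, Fin.ne_of_val_ne (by simp [h])⟩
              · exact ⟨⟨2, by omega⟩, by simp, Fin.ne_of_val_ne (by simpa using Ne.symm h)⟩
            have hknz : k ≠ z := Fin.ne_of_val_ne (by omega)
            have hkno : k ≠ o := Fin.ne_of_val_ne (by omega)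
            have hDid : D = quadP i₀ o z k ∆ (quadP o z i₀ k ∆ quadP z i₀ o k) := by
              rw [hDS]
              ext ⟨x, y⟩
              simp only [Finset.mem_insert, Finset.mem_singleton, Prod.mk.injEq]
              constructor
              · rintro (⟨rfl, rfl⟩ | ⟨rfl, rfl⟩ | ⟨rfl, rfl⟩ | ⟨rfl, rfl⟩ | ⟨rfl, rfl⟩ |
                    ⟨rfl, rfl⟩) <;>
                  simp [Finset.mem_symmDiff, quadP, Prod.mk.injEq, hi0nz, hi0no, hzo, hki,
                    hknz, hkno, Ne.symm hi0nz, Ne.symm hi0no, Ne.symm hzo, Ne.symm hki,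
                    Ne.symm hknz, Ne.symm hkno]
              · intro h
                have h3 : ((x, y) : Fin n × Fin n) ∈
                    quadP i₀ o z k ∪ (quadP o z i₀ k ∪ quadP z i₀ o k) := by
                  rcases Finset.mem_union.1 (symmDiff_subset_union _ _ h) with h' | h'
                  · exact Finset.mem_union.2 (Or.inl h')
                  · exact Finset.mem_union.2 (Or.inr (symmDiff_subset_union _ _ h'))
                simp only [quadP, Finset.mem_union, Finset.mem_insert, Finset.mem_singleton,
                  Prod.mk.injEq] at h3
                rcases h3 with (⟨rfl,rfl⟩|⟨rfl,rfl⟩|⟨rfl,rfl⟩|⟨rfl,rfl⟩) |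
                    ((⟨rfl,rfl⟩|⟨rfl,rfl⟩|⟨rfl,rfl⟩|⟨rfl,rfl⟩) |
                     (⟨rfl,rfl⟩|⟨rfl,rfl⟩|⟨rfl,rfl⟩|⟨rfl,rfl⟩)) <;>
                  first
                    | (simp [hi0nz, hi0no, hzo, hki, hknz, hkno, Ne.symm hi0nz, Ne.symm hi0no,
                        Ne.symm hzo, Ne.symm hki, Ne.symm hknz, Ne.symm hkno]; done)
                    | (exfalso;
                       simp [Finset.mem_symmDiff, quadP, Prod.mk.injEq, hi0nz, hi0no, hzo,
                         hki, hknz, hkno, Ne.symm hi0nz, Ne.symm hi0no, Ne.symm hzo,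
                         Ne.symm hki, Ne.symm hknz, Ne.symm hkno] at h)
            rw [hDid, emb_symmDiff, emb_symmDiff]
            refine span_symmDiff (span_quad (quadP_isQuad hi0no (Ne.symm hknz) hi0nz
              (Ne.symm hki) (Ne.symm hzo) (Ne.symm hkno)))
              (span_symmDiff (span_quad (quadP_isQuad (Ne.symm hzo) (Ne.symm hki)
                (Ne.symm hi0no) (Ne.symm hkno) (Ne.symm hi0nz) (Ne.symm hknz)))
                (span_quad (quadP_isQuad (Ne.symm hi0nz) (Ne.symm hkno) hzo (Ne.symm hknz)
                  hi0no (Ne.symm hki))))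
          · have hDid : D = quadP i₀ o z j₀ ∆ quadP i₀ z j₀ o := by
              rw [hDS]
              ext ⟨x, y⟩
              simp only [Finset.mem_insert, Finset.mem_singleton, Prod.mk.injEq]
              constructor
              · rintro (⟨rfl, rfl⟩ | ⟨rfl, rfl⟩ | ⟨rfl, rfl⟩ | ⟨rfl, rfl⟩ | ⟨rfl, rfl⟩ |
                    ⟨rfl, rfl⟩) <;>
                  simp [Finset.mem_symmDiff, quadP, Prod.mk.injEq, hi0nz, hi0no, hj0nz, hj0no,
                    hzo, hij, Ne.symm hi0nz, Ne.symm hi0no, Ne.symm hj0nz, Ne.symm hj0no,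
                    Ne.symm hzo, Ne.symm hij]
              · intro h
                have h3 := symmDiff_subset_union _ _ h
                simp only [quadP, Finset.mem_union, Finset.mem_insert, Finset.mem_singleton,
                  Prod.mk.injEq] at h3
                rcases h3 with (⟨rfl,rfl⟩|⟨rfl,rfl⟩|⟨rfl,rfl⟩|⟨rfl,rfl⟩) |
                    (⟨rfl,rfl⟩|⟨rfl,rfl⟩|⟨rfl,rfl⟩|⟨rfl,rfl⟩) <;>
                  first
                    | (simp [hi0nz, hi0no, hj0nz, hj0no, hzo, hij, Ne.symm hi0nz, Ne.symm hi0no,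
                        Ne.symm hj0nz, Ne.symm hj0no, Ne.symm hzo, Ne.symm hij]; done)
                    | (exfalso;
                       simp [Finset.mem_symmDiff, quadP, Prod.mk.injEq, hi0nz, hi0no, hj0nz,
                         hj0no, hzo, hij, Ne.symm hi0nz, Ne.symm hi0no, Ne.symm hj0nz,
                         Ne.symm hj0no, Ne.symm hzo, Ne.symm hij] at h)
            rw [hDid, emb_symmDiff]
            exact span_symmDiff (span_quad (quadP_isQuad hi0no (Ne.symm hj0nz) hi0nz hij
              (Ne.symm hzo) (Ne.symm hj0no)))
              (span_quad (quadP_isQuad hi0nz hj0no hij hi0no (Ne.symm hj0nz) hzo))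

/- ## From 1-cycles to pair sets -/

def pr : (Fin n ⊕ Fin n) → (Fin n ⊕ Fin n) → Fin n × Fin n
  | Sum.inl i, Sum.inr j => (i, j)
  | Sum.inr j, Sum.inl i => (i, j)
  | Sum.inl i, Sum.inl i' => (min i i', min i i')
  | Sum.inr j, Sum.inr j' => (min j j', min j j')

theorem pr_symm : ∀ u v : Fin n ⊕ Fin n, pr u v = pr v u := by
  rintro (i | i) (j | j) <;> simp [pr, min_comm]

def iota : Sym2 (Fin n ⊕ Fin n) → Fin n × Fin n := Sym2.lift ⟨pr, pr_symm⟩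

theorem iota_edg (i j : Fin n) : iota (edg i j) = (i, j) := rfl

theorem edge_form {e : Sym2 (Fin n ⊕ Fin n)} (h : e ∈ (tildeK n).edgeSet) :
    ∃ i j : Fin n, i ≠ j ∧ e = edg i j := by
  induction e using Sym2.ind with
  | _ u v =>
    rw [SimpleGraph.mem_edgeSet] at h
    rw [tildeK, SimpleGraph.fromRel_adj] at h
    obtain ⟨-, h | h⟩ := h
    · obtain ⟨i, j, hij, rfl, rfl⟩ := h
      exact ⟨i, j, hij, rfl⟩
    · obtain ⟨i, j, hij, rfl, rfl⟩ := h
      exact ⟨i, j, hij, Sym2.eq_swap⟩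

theorem main (hn : 4 ≤ n) (C : Finset (Sym2 (Fin n ⊕ Fin n)))
    (hC : IsOneCycle (tildeK n) C) : Span n C := by
  obtain ⟨hC1, hC2⟩ := hC
  have hrep : ∀ e ∈ C, ∃ i j : Fin n, i ≠ j ∧ e = edg i j := fun e he => edge_form (hC1 e he)
  have hCD : emb (C.image iota) = C := by
    rw [emb, Finset.image_image]
    have : ∀ e ∈ C, ((fun p : Fin n × Fin n => edg p.1 p.2) ∘ iota) e = id e := by
      intro e he
      obtain ⟨i, j, hij, rfl⟩ := hrep e he
      simp [Function.comp, iota_edg]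
    rw [Finset.image_congr this, Finset.image_id]
  have hinj : ∀ e ∈ C, ∀ e' ∈ C, iota e = iota e' → e = e' := by
    intro e he e' he' h
    obtain ⟨i, j, hij, rfl⟩ := hrep e he
    obtain ⟨i', j', hij', rfl⟩ := hrep e' he'
    rw [iota_edg, iota_edg] at h
    rw [edg_eq_iff]
    exact ⟨congrArg Prod.fst h, congrArg Prod.snd h⟩
  have hGood : Good (C.image iota) := by
    refine ⟨?_, ?_, ?_⟩
    · intro p hp
      obtain ⟨e, he, rfl⟩ := Finset.mem_image.1 hp
      obtain ⟨i, j, hij, rfl⟩ := hrep e he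
      rw [iota_edg]
      exact hij
    · intro i
      rw [Finset.filter_image]
      rw [Finset.card_image_of_injOn (fun e he e' he' h =>
        hinj e (Finset.mem_filter.1 he).1 e' (Finset.mem_filter.1 he').1 h)]
      have : C.filter (fun e => (iota e).1 = i) = C.filter (fun e => Sum.inl i ∈ e) := by
        apply Finset.filter_congr
        intro e he
        obtain ⟨a, b, hab, rfl⟩ := hrep e he
        rw [iota_edg]
        simp [edg, eq_comm]
      rw [this]
      exact hC2 (Sum.inl i)
    · intro j
      rw [Finset.filter_image]
      rw [Finset.card_image_of_injOn (fun e he e' he' h =>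
        hinj e (Finset.mem_filter.1 he).1 e' (Finset.mem_filter.1 he').1 h)]
      have : C.filter (fun e => (iota e).2 = j) = C.filter (fun e => Sum.inr j ∈ e) := by
        apply Finset.filter_congr
        intro e he
        obtain ⟨a, b, hab, rfl⟩ := hrep e he
        rw [iota_edg]
        simp [edg, eq_comm]
      rw [this]
      exact hC2 (Sum.inr j)
  have := key hn ((C.image iota).card + 4 * ((C.image iota).filter Out).card)
    (C.image iota) le_rfl hGood
  rwa [hCD] at this

end TKaux

theorem isOneCycle_tildeK_eq_sum_of_quads (n : ℕ) (hn : 4 ≤ n)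
    (C : Finset (Sym2 (Fin n ⊕ Fin n))) (hC : IsOneCycle (tildeK n) C) :
    ∃ l : List (Finset (Sym2 (Fin n ⊕ Fin n))),
      (∀ s ∈ l, IsQuadCycle (tildeK n) s) ∧
      C = l.foldr symmDiff ∅ := TKaux.main hn C hC
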